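/- arXiv:1705.00954 — 3 statements merged into one kernel-verified Lean document; each statement's English description precedes it below -/
import Mathlib

section
/- Discrete ℓ² summation estimate over dyadic cubes (large part): Let 1 < p < 2 and let F : ℝ² → [0,∞) be in L²(ℝ²) with ‖F‖_{L²} ≤ 1. For j ∈ ℤ let 𝒟_j be the dyadic cubes of side-length 2^j. Then Σ_{j∈ℤ} Σ_{Q∈𝒟_j} ( |Q|^{−(2−p)/p} ‖F·χ_{{F ≥ 2^{−j}}}‖_{L^p(Q)}² )^{3/2} ≲ 1, where the implicit constant depends only on p. -/
open MeasureTheory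
open scoped ENNReal NNReal

noncomputable section

abbrev E2 := EuclideanSpace ℝ (Fin 2)

/-- The dyadic cube of side-length `2^j` in `ℝ²` indexed by `k ∈ ℤ²`:
`[2^j k₁, 2^j(k₁+1)) × [2^j k₂, 2^j(k₂+1))`. -/
def dyadicCube (j : ℤ) (k : Fin 2 → ℤ) : Set E2 :=
  {ξ | ∀ i, (2 : ℝ) ^ j * k i ≤ ξ i ∧ ξ i < (2 : ℝ) ^ j * (k i + 1)}

namespace Stmt5Aux

lemma two_zpow_pos (j : ℤ) : (0:ℝ) < 2 ^ j := zpow_pos (by norm_num) j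

lemma cube_eq (j : ℤ) (k : Fin 2 → ℤ) :
    dyadicCube j k = ⇑((MeasurableEquiv.toLp 2 (Fin 2 → ℝ)).symm) ⁻¹'
      (Set.univ.pi fun i => Set.Ico ((2:ℝ)^j * k i) ((2:ℝ)^j * (k i + 1))) := by
  ext ξ
  simp only [dyadicCube, Set.mem_setOf_eq, Set.mem_preimage, Set.mem_univ_pi, Set.mem_Ico]
  rfl

lemma cube_measurableSet (j : ℤ) (k : Fin 2 → ℤ) : MeasurableSet (dyadicCube j k) := by
  rw [cube_eq]
  exact ((MeasurableEquiv.toLp 2 (Fin 2 → ℝ)).symm).measurable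
    (MeasurableSet.univ_pi fun i => measurableSet_Ico)

lemma mem_cube_iff_floor (j : ℤ) (k : Fin 2 → ℤ) (ξ : E2) :
    ξ ∈ dyadicCube j k ↔ ∀ i, k i = ⌊ξ i / (2:ℝ)^j⌋ := by
  have h2 := two_zpow_pos j
  constructor
  · intro h i
    refine (Int.floor_eq_iff.2 ?_).symm
    obtain ⟨h1, h2'⟩ := h i
    constructor
    · rw [le_div_iff₀ h2]; linarith [h1]
    · rw [div_lt_iff₀ h2]; push_cast; linarith [h2']
  · intro h i
    have h1 : (k i : ℝ) ≤ ξ i / (2:ℝ)^j := by rw [h i]; exact Int.floor_le _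
    have h2' : ξ i / (2:ℝ)^j < k i + 1 := by
      rw [h i]; push_cast; exact Int.lt_floor_add_one _
    constructor
    · rw [mul_comm, ← le_div_iff₀ h2]; exact h1
    · rw [mul_comm, ← div_lt_iff₀ h2]; push_cast; exact h2'

lemma cube_disjoint (j : ℤ) : Pairwise (Function.onFun Disjoint (dyadicCube j)) := by
  intro k k' hne
  rw [Function.onFun, Set.disjoint_left]
  intro ξ h1 h2
  apply hne
  funext i
  rw [(mem_cube_iff_floor j k ξ).1 h1 i, (mem_cube_iff_floor j k' ξ).1 h2 i]

lemma cube_cover (j : ℤ) : ⋃ k : Fin 2 → ℤ, dyadicCube j k = Set.univ := by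
  ext ξ
  simp only [Set.mem_iUnion, Set.mem_univ, iff_true]
  exact ⟨fun i => ⌊ξ i / (2:ℝ)^j⌋, (mem_cube_iff_floor j _ ξ).2 fun i => rfl⟩

lemma volume_cube (j : ℤ) (k : Fin 2 → ℤ) :
    volume (dyadicCube j k) = ENNReal.ofReal ((4:ℝ)^j) := by
  rw [cube_eq]
  rw [(EuclideanSpace.volume_preserving_symm_measurableEquiv_toLp (Fin 2)).measure_preimage
    ((MeasurableSet.univ_pi fun i => measurableSet_Ico).nullMeasurableSet)]
  rw [volume_pi_pi]
  have : ∀ i : Fin 2, volume (Set.Ico ((2:ℝ)^j * k i) ((2:ℝ)^j * (k i + 1)))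
      = ENNReal.ofReal ((2:ℝ)^j) := by
    intro i
    rw [Real.volume_Ico]
    congr 1
    ring
  simp only [this]
  rw [Fin.prod_const, ← ENNReal.ofReal_pow (two_zpow_pos j).le]
  congr 1
  rw [← zpow_natCast ((2:ℝ)^j) 2, ← zpow_mul, mul_comm, zpow_mul]
  norm_num

/-- partition of lintegral over dyadic cubes -/
lemma lintegral_cubes (j : ℤ) (f : E2 → ENNReal) :
    ∑' k : Fin 2 → ℤ, ∫⁻ ξ in dyadicCube j k, f ξ = ∫⁻ ξ, f ξ := by
  rw [← lintegral_iUnion (cube_measurableSet j) (cube_disjoint j) f, cube_cover,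
    Measure.restrict_univ]

/-- Hölder on a set -/
lemma holder (p : ℝ) (hp₁ : 1 < p) (hp₂ : p < 2) (g : E2 → ENNReal) (hg : Measurable g)
    (Q : Set E2) :
    ∫⁻ ξ in Q, g ξ ^ p ≤ (∫⁻ ξ in Q, g ξ ^ (2:ℝ)) ^ (p/2) * (volume Q) ^ ((2-p)/2) := by
  have hp0 : 0 < p := by linarith
  have hconj : (2/p).HolderConjugate (2/(2-p)) := by
    rw [Real.holderConjugate_iff]; constructor
    · rw [lt_div_iff₀ hp0]; linarith
    · rw [inv_div, inv_div]; ring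
  have h := ENNReal.lintegral_mul_le_Lp_mul_Lq (volume.restrict Q) hconj
    (f := fun ξ => g ξ ^ p) (g := fun _ => 1)
    (by measurability) (by measurability)
  simp only [Pi.mul_apply, mul_one, ENNReal.one_rpow, lintegral_one,
    Measure.restrict_apply_univ, one_div_div] at h
  calc ∫⁻ ξ in Q, g ξ ^ p ≤ (∫⁻ ξ in Q, (g ξ ^ p) ^ (2/p)) ^ (p/2) * volume Q ^ ((2-p)/2) := h
    _ = (∫⁻ ξ in Q, g ξ ^ (2:ℝ)) ^ (p/2) * volume Q ^ ((2-p)/2) := by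
        congr 1
        congr 1
        refine lintegral_congr fun ξ => ?_
        rw [← ENNReal.rpow_mul]
        congr 1
        field_simp

/-- pure real-number inequality on each cube -/
lemma key_real (p : ℝ) (hp₁ : 1 < p) (hp₂ : p < 2) (u B : ℝ) (hu : 0 < u) (hB : 0 ≤ B)
    (hBu : B ≤ u ^ ((2-p)/2)) :
    (u ^ (-(2-p)/p) * B ^ (2/p)) ^ (3/2 : ℝ) ≤ u ^ (-(2-p)/2) * B := by
  have hp0 : 0 < p := by linarith
  rcases eq_or_lt_of_le hB with hB0 | hB0
  · rw [← hB0]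
    rw [Real.zero_rpow (ne_of_gt (div_pos two_pos hp0)), mul_zero, mul_zero,
      Real.zero_rpow (by norm_num : (3/2:ℝ) ≠ 0)]
  · have hx1 : u ^ (-(2-p)/p) * B ^ (2/p) ≤ 1 := by
      have h1 : B ^ (2/p) ≤ u ^ ((2-p)/p) := by
        calc B ^ (2/p) ≤ (u ^ ((2-p)/2)) ^ (2/p) :=
              Real.rpow_le_rpow hB hBu (div_nonneg (by norm_num) hp0.le)
          _ = u ^ ((2-p)/p) := by
              rw [← Real.rpow_mul hu.le]
              congr 1
              field_simp
      calc u ^ (-(2-p)/p) * B ^ (2/p) ≤ u ^ (-(2-p)/p) * u ^ ((2-p)/p) :=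
            mul_le_mul_of_nonneg_left h1 (Real.rpow_pos_of_pos hu _).le
        _ = 1 := by
            rw [← Real.rpow_add hu, show -(2-p)/p + (2-p)/p = (0:ℝ) by ring,
              Real.rpow_zero]
    have hx0 : 0 < u ^ (-(2-p)/p) * B ^ (2/p) :=
      mul_pos (Real.rpow_pos_of_pos hu _) (Real.rpow_pos_of_pos hB0 _)
    have h32 : (u ^ (-(2-p)/p) * B ^ (2/p)) ^ (3/2 : ℝ) ≤ u ^ (-(2-p)/p) * B ^ (2/p) := by
      calc (u ^ (-(2-p)/p) * B ^ (2/p)) ^ (3/2 : ℝ)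
          ≤ (u ^ (-(2-p)/p) * B ^ (2/p)) ^ (1 : ℝ) :=
            Real.rpow_le_rpow_of_exponent_ge hx0 hx1 (by norm_num)
        _ = u ^ (-(2-p)/p) * B ^ (2/p) := Real.rpow_one _
    have hsplit : B ^ (2/p) = B ^ (1:ℝ) * B ^ ((2-p)/p) := by
      rw [← Real.rpow_add hB0]
      congr 1
      field_simp
      ring
    refine h32.trans ?_
    have hBB : B ^ ((2-p)/p) ≤ (u ^ ((2-p)/2)) ^ ((2-p)/p) :=
      Real.rpow_le_rpow hB hBu (div_nonneg (by linarith) hp0.le)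
    calc u ^ (-(2-p)/p) * B ^ (2/p)
        = (u ^ (-(2-p)/p) * B ^ ((2-p)/p)) * B := by rw [hsplit, Real.rpow_one]; ring
      _ ≤ (u ^ (-(2-p)/p) * (u ^ ((2-p)/2)) ^ ((2-p)/p)) * B :=
          mul_le_mul_of_nonneg_right
            (mul_le_mul_of_nonneg_left hBB (Real.rpow_pos_of_pos hu _).le) hB
      _ = u ^ (-(2-p)/2) * B := by
          rw [← Real.rpow_mul hu.le, ← Real.rpow_add hu]
          congr 2
          field_simp
          ring

lemma geom (p : ℝ) (hp₁ : 1 < p) (hp₂ : p < 2) (t : ℝ) (ht : 0 ≤ t) :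
    ∑' j : ℤ, ENNReal.ofReal (((4:ℝ)^j) ^ (-(2-p)/2 : ℝ)) *
      ENNReal.ofReal (if (2:ℝ)^(-j) ≤ t then t else 0) ^ (p:ℝ)
    ≤ (1 - (2:ℝ≥0∞) ^ (-(2-p)))⁻¹ * ENNReal.ofReal t ^ (2:ℝ) := by
  have hp0 : (0:ℝ) < p := by linarith
  have hc : ∀ j : ℤ, ENNReal.ofReal (((4:ℝ)^j) ^ (-(2-p)/2 : ℝ))
      = (2:ℝ≥0∞) ^ ((-(j:ℝ))*(2-p)) := by
    intro j
    have hreal : ((4:ℝ)^j) ^ (-(2-p)/2 : ℝ) = (2:ℝ) ^ ((-(j:ℝ))*(2-p)) := by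
      rw [show (4:ℝ)^j = (2:ℝ)^(2*j : ℤ) by rw [zpow_mul]; norm_num,
        ← Real.rpow_intCast (2:ℝ) (2*j), ← Real.rpow_mul (by norm_num)]
      congr 1
      push_cast
      ring
    rw [hreal, show (2:ℝ≥0∞) = ENNReal.ofReal 2 by simp,
      ENNReal.ofReal_rpow_of_pos (by norm_num)]
  rcases eq_or_lt_of_le ht with ht0 | ht0
  · have hno : ∀ j : ℤ, ¬ ((2:ℝ)^(-j) ≤ t) := by
      intro j h
      have h2 := two_zpow_pos (-j)
      linarith
    have : ∀ j : ℤ, ENNReal.ofReal (((4:ℝ)^j) ^ (-(2-p)/2 : ℝ)) *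
        ENNReal.ofReal (if (2:ℝ)^(-j) ≤ t then t else 0) ^ (p:ℝ) = 0 := by
      intro j
      rw [if_neg (hno j), ENNReal.ofReal_zero, ENNReal.zero_rpow_of_pos hp0, mul_zero]
    rw [tsum_congr this, tsum_zero]
    exact zero_le
  · set j₀ : ℤ := ⌈-Real.logb 2 t⌉ with hj₀def
    have hlogt : (2:ℝ) ^ (Real.logb 2 t) = t := Real.rpow_logb two_pos (by norm_num) ht0
    have hcond : ∀ j : ℤ, j₀ ≤ j → (2:ℝ)^(-j) ≤ t := by
      intro j hj
      have h1 : -Real.logb 2 t ≤ (j:ℝ) := le_trans (Int.le_ceil _) (by exact_mod_cast hj)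
      calc (2:ℝ)^(-j) = (2:ℝ)^((-j:ℤ):ℝ) := (Real.rpow_intCast 2 (-j)).symm
        _ ≤ (2:ℝ)^(Real.logb 2 t) :=
            Real.rpow_le_rpow_of_exponent_le (by norm_num) (by push_cast; linarith)
        _ = t := hlogt
    have hj0 : ∀ j : ℤ, (2:ℝ)^(-j) ≤ t → j₀ ≤ j := by
      intro j h
      apply Int.ceil_le.2
      have h1 : (2:ℝ)^((-j:ℤ):ℝ) ≤ (2:ℝ)^(Real.logb 2 t) := by
        rw [Real.rpow_intCast, hlogt]; exact h
      have h2 := (Real.rpow_le_rpow_left_iff (by norm_num : (1:ℝ) < 2)).1 h1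
      push_cast at h2 ⊢
      linarith
    set f : ℤ → ℝ≥0∞ := fun j => ENNReal.ofReal (((4:ℝ)^j) ^ (-(2-p)/2 : ℝ)) *
      ENNReal.ofReal (if (2:ℝ)^(-j) ≤ t then t else 0) ^ (p:ℝ) with hfdef
    have hinj : Function.Injective (fun n : ℕ => j₀ + (n:ℤ)) := by
      intro a b h
      simpa using h
    have hsupp : Function.support f ⊆ Set.range (fun n : ℕ => j₀ + (n:ℤ)) := by
      intro j hj
      have hcnd : (2:ℝ)^(-j) ≤ t := by
        by_contra hcc
        apply hj
        rw [hfdef]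
        simp only
        rw [if_neg hcc, ENNReal.ofReal_zero, ENNReal.zero_rpow_of_pos hp0, mul_zero]
      have := hj0 j hcnd
      exact ⟨(j - j₀).toNat, by show j₀ + ((j - j₀).toNat : ℤ) = j; omega⟩
    have hshift : ∑' j : ℤ, f j = ∑' n : ℕ, f (j₀ + n) :=
      (Function.Injective.tsum_eq hinj hsupp).symm
    have hfn : ∀ n : ℕ, f (j₀ + n) =
        ((2:ℝ≥0∞)^((-(j₀:ℝ))*(2-p)) * ENNReal.ofReal t ^ (p:ℝ)) *
          ((2:ℝ≥0∞)^(-(2-p)))^n := by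
      intro n
      have hcnd : (2:ℝ)^(-(j₀ + (n:ℤ))) ≤ t :=
        hcond _ (by omega)
      rw [hfdef]
      simp only
      rw [if_pos hcnd, hc]
      rw [show (-((j₀ + (n:ℤ) : ℤ):ℝ)) * (2-p)
          = (-(j₀:ℝ))*(2-p) + (-(2-p))*(n:ℝ) by push_cast; ring]
      rw [ENNReal.rpow_add _ _ (by norm_num) (by norm_num),
        show ((2:ℝ≥0∞)^(-(2-p)))^n = (2:ℝ≥0∞)^((-(2-p))*(n:ℝ)) by
          rw [← ENNReal.rpow_natCast ((2:ℝ≥0∞)^(-(2-p))) n, ← ENNReal.rpow_mul]]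
      ring
    have hgeo : ∑' n : ℕ, f (j₀ + n) =
        ((2:ℝ≥0∞)^((-(j₀:ℝ))*(2-p)) * ENNReal.ofReal t ^ (p:ℝ)) *
          (1 - (2:ℝ≥0∞) ^ (-(2-p)))⁻¹ := by
      rw [tsum_congr hfn, ENNReal.tsum_mul_left, ENNReal.tsum_geometric]
    have hbound : (2:ℝ≥0∞)^((-(j₀:ℝ))*(2-p)) ≤ ENNReal.ofReal t ^ ((2-p):ℝ) := by
      have h0 : (2:ℝ≥0∞)^((-(j₀:ℝ))) ≤ ENNReal.ofReal t := by
        have h1 := hcond j₀ le_rfl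
        calc (2:ℝ≥0∞)^((-(j₀:ℝ))) = ENNReal.ofReal ((2:ℝ)^((-(j₀:ℝ)))) := by
              rw [show (2:ℝ≥0∞) = ENNReal.ofReal 2 by simp,
                ENNReal.ofReal_rpow_of_pos (by norm_num)]
          _ ≤ ENNReal.ofReal t := by
              refine ENNReal.ofReal_le_ofReal ?_
              rw [show (-(j₀:ℝ)) = ((-j₀ : ℤ) : ℝ) by push_cast; ring,
                Real.rpow_intCast]
              exact h1
      rw [ENNReal.rpow_mul]
      exact ENNReal.rpow_le_rpow h0 (by linarith)
    rw [hshift, hgeo]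
    have htne : ENNReal.ofReal t ≠ 0 := (ENNReal.ofReal_pos.2 ht0).ne'
    calc ((2:ℝ≥0∞)^((-(j₀:ℝ))*(2-p)) * ENNReal.ofReal t ^ (p:ℝ)) *
          (1 - (2:ℝ≥0∞) ^ (-(2-p)))⁻¹
        ≤ (ENNReal.ofReal t ^ ((2-p):ℝ) * ENNReal.ofReal t ^ (p:ℝ)) *
          (1 - (2:ℝ≥0∞) ^ (-(2-p)))⁻¹ :=
          mul_le_mul_left (mul_le_mul_left hbound _) _
      _ = (1 - (2:ℝ≥0∞) ^ (-(2-p)))⁻¹ * ENNReal.ofReal t ^ (2:ℝ) := by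
          rw [← ENNReal.rpow_add _ _ htne ENNReal.ofReal_ne_top,
            show (2-p) + p = (2:ℝ) by ring, mul_comm]

lemma l2_bound (F : E2 → ℝ) (hF0 : ∀ ξ, 0 ≤ F ξ) (h : eLpNorm F 2 volume ≤ 1) :
    ∫⁻ ξ, ENNReal.ofReal (F ξ) ^ (2:ℝ) ≤ 1 := by
  rw [eLpNorm_eq_lintegral_rpow_enorm_toReal (by norm_num) (by norm_num)] at h
  simp only [ENNReal.toReal_ofNat] at h
  have h2 : (∫⁻ ξ, ‖F ξ‖ₑ ^ (2:ℝ) ∂volume) ≤ 1 := by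
    have h3 := ENNReal.rpow_le_rpow h (by norm_num : (0:ℝ) ≤ 2)
    rwa [ENNReal.one_rpow, ← ENNReal.rpow_mul, one_div,
      inv_mul_cancel₀ (by norm_num : (2:ℝ) ≠ 0), ENNReal.rpow_one] at h3
  calc ∫⁻ ξ, ENNReal.ofReal (F ξ) ^ (2:ℝ)
      = ∫⁻ ξ, ‖F ξ‖ₑ ^ (2:ℝ) := by
        refine lintegral_congr fun ξ => ?_
        rw [Real.enorm_eq_ofReal (hF0 ξ)]
    _ ≤ 1 := h2

lemma meas_ofReal_rpow {f : E2 → ℝ} (hf : Measurable f) (c : ℝ) :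
    Measurable fun ξ => ENNReal.ofReal (f ξ) ^ c := by measurability

lemma meas_rpow {f : E2 → ℝ} (hf : Measurable f) (c : ℝ) :
    Measurable fun ξ => f ξ ^ c := by measurability

lemma meas_ofReal {f : E2 → ℝ} (hf : Measurable f) :
    Measurable fun ξ => ENNReal.ofReal (f ξ) := by measurability

end Stmt5Aux

open Stmt5Aux in
/-- Discrete `ℓ²` summation estimate over dyadic cubes (large part): for `1 < p < 2` and
`F ≥ 0` with `‖F‖_{L²(ℝ²)} ≤ 1`,
`∑_j ∑_{Q ∈ 𝒟_j} (|Q|^{-(2-p)/p} ‖F·χ_{F ≥ 2^{-j}}‖_{L^p(Q)}²)^{3/2} ≲_p 1`. -/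
theorem stmt5 (p : ℝ) (hp₁ : 1 < p) (hp₂ : p < 2) :
    ∃ C > 0, ∀ F : E2 → ℝ, Measurable F → (∀ ξ, 0 ≤ F ξ) →
      eLpNorm F 2 volume ≤ 1 →
      (∑' q : ℤ × (Fin 2 → ℤ),
        (((4 : ℝ) ^ q.1) ^ (-(2 - p) / p) *
          (∫ ξ in dyadicCube q.1 q.2,
            (if (2 : ℝ) ^ (-q.1) ≤ F ξ then F ξ else 0) ^ p) ^ (2 / p)) ^ (3 / 2 : ℝ))
        ≤ C := by
  have hp0 : (0:ℝ) < p := by linarith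
  set 𝒞 : ℝ≥0∞ := (1 - (2:ℝ≥0∞) ^ (-(2-p)))⁻¹ with h𝒞
  have hb1 : (2:ℝ≥0∞) ^ (-(2-p)) < 1 :=
    ENNReal.rpow_lt_one_of_one_lt_of_neg (by norm_num) (by linarith)
  have h𝒞top : 𝒞 ≠ ⊤ := by
    rw [h𝒞, Ne, ENNReal.inv_eq_top, tsub_eq_zero_iff_le]
    exact not_le.2 hb1
  refine ⟨𝒞.toReal + 1, by positivity, ?_⟩
  intro F hF hF0 hFL2
  have hg2 := l2_bound F hF0 hFL2
  set G : ℤ → E2 → ℝ := fun j ξ => if (2:ℝ)^(-j) ≤ F ξ then F ξ else 0 with hG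
  have hGmeas : ∀ j, Measurable (G j) := fun j =>
    Measurable.ite (measurableSet_le measurable_const hF) hF measurable_const
  have hG0 : ∀ j ξ, 0 ≤ G j ξ := fun j ξ => by
    show (0:ℝ) ≤ if (2:ℝ)^(-j) ≤ F ξ then F ξ else 0
    split_ifs with h
    exacts [hF0 ξ, le_rfl]
  have hGle : ∀ j ξ, ENNReal.ofReal (G j ξ) ≤ ENNReal.ofReal (F ξ) := fun j ξ =>
    ENNReal.ofReal_le_ofReal (by
      show (if (2:ℝ)^(-j) ≤ F ξ then F ξ else 0) ≤ F ξ
      split_ifs with h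
      exacts [le_rfl, hF0 ξ])
  set W : ℤ × (Fin 2 → ℤ) → ℝ≥0∞ := fun q =>
    ENNReal.ofReal (((4:ℝ)^q.1) ^ (-(2-p)/2 : ℝ)) *
      ∫⁻ ξ in dyadicCube q.1 q.2, ENNReal.ofReal (G q.1 ξ) ^ (p:ℝ) with hW
  have htot : ∑' q, W q ≤ 𝒞 := by
    calc ∑' q, W q
        = ∑' (j : ℤ) (k : Fin 2 → ℤ), ENNReal.ofReal (((4:ℝ)^j) ^ (-(2-p)/2 : ℝ)) *
            ∫⁻ ξ in dyadicCube j k, ENNReal.ofReal (G j ξ) ^ (p:ℝ) := by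
          simp only [hW]
          exact ENNReal.tsum_prod (f := fun j k =>
            ENNReal.ofReal (((4:ℝ)^j) ^ (-(2-p)/2 : ℝ)) *
              ∫⁻ ξ in dyadicCube j k, ENNReal.ofReal (G j ξ) ^ (p:ℝ))
      _ = ∑' j : ℤ, ENNReal.ofReal (((4:ℝ)^j) ^ (-(2-p)/2 : ℝ)) *
            ∫⁻ ξ, ENNReal.ofReal (G j ξ) ^ (p:ℝ) := by
          refine tsum_congr fun j => ?_
          rw [ENNReal.tsum_mul_left, lintegral_cubes]
      _ = ∑' j : ℤ, ∫⁻ ξ, ENNReal.ofReal (((4:ℝ)^j) ^ (-(2-p)/2 : ℝ)) *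
            ENNReal.ofReal (G j ξ) ^ (p:ℝ) := by
          refine tsum_congr fun j => ?_
          rw [lintegral_const_mul _ (meas_ofReal_rpow (hGmeas j) p)]
      _ = ∫⁻ ξ, ∑' j : ℤ, ENNReal.ofReal (((4:ℝ)^j) ^ (-(2-p)/2 : ℝ)) *
            ENNReal.ofReal (G j ξ) ^ (p:ℝ) :=
          (lintegral_tsum fun j =>
            ((meas_ofReal_rpow (hGmeas j) p).const_mul _).aemeasurable).symm
      _ ≤ ∫⁻ ξ, 𝒞 * ENNReal.ofReal (F ξ) ^ (2:ℝ) :=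
          lintegral_mono fun ξ => geom p hp₁ hp₂ (F ξ) (hF0 ξ)
      _ = 𝒞 * ∫⁻ ξ, ENNReal.ofReal (F ξ) ^ (2:ℝ) :=
          lintegral_const_mul 𝒞 (meas_ofReal_rpow hF 2)
      _ ≤ 𝒞 * 1 := mul_le_mul_right hg2 𝒞
      _ = 𝒞 := mul_one 𝒞
  have hWtop : ∀ q, W q ≠ ⊤ := fun q =>
    ne_top_of_le_ne_top h𝒞top (le_trans (ENNReal.le_tsum q) htot)
  have hterm : ∀ q : ℤ × (Fin 2 → ℤ),
      (((4:ℝ)^q.1) ^ (-(2-p)/p) *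
        (∫ ξ in dyadicCube q.1 q.2, (G q.1 ξ) ^ p) ^ (2/p)) ^ (3/2:ℝ)
        ≤ (W q).toReal := by
    rintro ⟨j, k⟩
    set Q := dyadicCube j k with hQ
    set I : ℝ≥0∞ := ∫⁻ ξ in Q, ENNReal.ofReal (G j ξ) ^ (p:ℝ) with hI
    have hu : (0:ℝ) < (4:ℝ)^j := zpow_pos (by norm_num) j
    have hI_le : I ≤ ENNReal.ofReal (((4:ℝ)^j) ^ ((2-p)/2 : ℝ)) := by
      have hh := holder p hp₁ hp₂ (fun ξ => ENNReal.ofReal (G j ξ)) (meas_ofReal (hGmeas j)) Q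
      have h2 : (∫⁻ ξ in Q, ENNReal.ofReal (G j ξ) ^ (2:ℝ)) ≤ 1 := by
        refine le_trans (le_trans (setLIntegral_le_lintegral Q _)
          (lintegral_mono fun ξ => ?_)) hg2
        exact ENNReal.rpow_le_rpow (hGle j ξ) (by norm_num)
      calc I ≤ (∫⁻ ξ in Q, ENNReal.ofReal (G j ξ) ^ (2:ℝ)) ^ (p/2) *
              (volume Q) ^ ((2-p)/2) := hh
        _ ≤ 1 ^ (p/2) * (volume Q) ^ ((2-p)/2) :=
            mul_le_mul_left (ENNReal.rpow_le_rpow h2 (by positivity)) _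
        _ = (volume Q) ^ ((2-p)/2) := by rw [ENNReal.one_rpow, one_mul]
        _ = ENNReal.ofReal (((4:ℝ)^j) ^ ((2-p)/2 : ℝ)) := by
            rw [hQ, volume_cube, ENNReal.ofReal_rpow_of_pos hu]
    have hB : ∫ ξ in Q, (G j ξ) ^ p = I.toReal := by
      rw [integral_eq_lintegral_of_nonneg_ae
        (Filter.Eventually.of_forall fun ξ => Real.rpow_nonneg (hG0 j ξ) p)
        ((meas_rpow (hGmeas j) p).aestronglyMeasurable)]
      congr 1
      refine lintegral_congr fun ξ => ?_
      rw [ENNReal.ofReal_rpow_of_nonneg (hG0 j ξ) hp0.le]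
    have hB0 : 0 ≤ ∫ ξ in Q, (G j ξ) ^ p := by
      rw [hB]; exact ENNReal.toReal_nonneg
    have hBle : ∫ ξ in Q, (G j ξ) ^ p ≤ ((4:ℝ)^j) ^ ((2-p)/2 : ℝ) := by
      rw [hB]
      exact ENNReal.toReal_le_of_le_ofReal (Real.rpow_nonneg hu.le _) hI_le
    have hkey := key_real p hp₁ hp₂ ((4:ℝ)^j) (∫ ξ in Q, (G j ξ) ^ p) hu hB0 hBle
    refine hkey.trans (le_of_eq ?_)
    have : W (j, k) = ENNReal.ofReal (((4:ℝ)^j) ^ (-(2-p)/2 : ℝ)) * I := rfl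
    rw [this, ENNReal.toReal_mul, ENNReal.toReal_ofReal (Real.rpow_nonneg hu.le _), hB]
  refine tsum_le_of_sum_le' (by positivity) fun s => ?_
  calc ∑ q ∈ s, (((4:ℝ)^q.1) ^ (-(2-p)/p) *
          (∫ ξ in dyadicCube q.1 q.2,
            (if (2:ℝ)^(-q.1) ≤ F ξ then F ξ else 0) ^ p) ^ (2/p)) ^ (3/2:ℝ)
      ≤ ∑ q ∈ s, (W q).toReal := Finset.sum_le_sum fun q _ => hterm q
    _ = (∑ q ∈ s, W q).toReal := (ENNReal.toReal_sum fun q _ => hWtop q).symm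
    _ ≤ 𝒞.toReal := ENNReal.toReal_mono h𝒞top (le_trans (ENNReal.sum_le_tsum s) htot)
    _ ≤ 𝒞.toReal + 1 := by linarith
end
end

section
/- Discrete ℓ² summation estimate over dyadic cubes (small part): Let F : ℝ² → [0,∞) be in L²(ℝ²) with ‖F‖_{L²} ≤ 1. Then Σ_{j∈ℤ} Σ_{Q∈𝒟_j} |Q|^{1/2} ‖F·χ_{{F ≤ 2^{−j}}}‖_{L³(Q)}³ ≲ 1. -/
open MeasureTheory ENNReal

noncomputable section

lemma ptw (a : ℝ) (ha : 0 ≤ a) :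
    ∑' j : ℤ, ENNReal.ofReal ((2:ℝ)^j * (if a ≤ (2:ℝ)^(-j) then a else 0)^3)
      ≤ ENNReal.ofReal (2 * a^2) := by
  rcases eq_or_lt_of_le ha with h0 | h0
  · simp [← h0]
  set J := Int.log 2 a⁻¹ with hJdef
  have hJ : (2:ℝ)^J ≤ a⁻¹ := Int.zpow_log_le_self (by norm_num) (inv_pos.2 h0)
  have hJ' : a⁻¹ < (2:ℝ)^(J+1) := Int.lt_zpow_succ_log_self (by norm_num) _
  have hvanish : ∀ j : ℤ, j ∉ Set.range (fun n : ℕ => J - n) →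
      ENNReal.ofReal ((2:ℝ)^j * (if a ≤ (2:ℝ)^(-j) then a else 0)^3) = 0 := by
    intro j hj
    have hjJ : J < j := by
      by_contra h
      push_neg at h
      exact hj ⟨(J - j).toNat, show J - ((J - j).toNat : ℤ) = j by omega⟩
    have h2 : a⁻¹ < (2:ℝ)^j := lt_of_lt_of_le hJ' (zpow_le_zpow_right₀ (by norm_num) (by omega))
    have : (2:ℝ)^(-j) < a := by
      rw [zpow_neg]
      exact inv_lt_of_inv_lt₀ h0 h2
    rw [if_neg (not_le.2 this)]
    simp
  have hinj : Function.Injective (fun n : ℕ => J - n) := by intro x y h; simpa using h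
  rw [← Function.Injective.tsum_eq hinj (Function.support_subset_iff'.2 hvanish)]
  have hsummand : ∀ n : ℕ, (2:ℝ)^(J - (n:ℤ)) * (if a ≤ (2:ℝ)^(-(J - (n:ℤ))) then a else 0)^3
      ≤ (2:ℝ)^J * a^3 * (1/2)^n := by
    intro n
    have h2 : (2:ℝ)^(J - (n:ℤ)) = (2:ℝ)^J * (1/2)^n := by
      rw [zpow_sub₀ (by norm_num : (2:ℝ) ≠ 0), zpow_natCast]
      ring_nf
      norm_num
    rw [h2]
    split
    · ring_nf; nlinarith [zpow_pos (by norm_num : (0:ℝ) < 2) J, pow_pos (by norm_num : (0:ℝ) < (1/2:ℝ)) n, pow_pos h0 3]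
    · have h1 := (zpow_pos (by norm_num : (0:ℝ) < 2) J).le
      nlinarith [pow_nonneg ha 3, pow_pos (by norm_num : (0:ℝ) < (1/2:ℝ)) n, mul_nonneg (mul_nonneg h1 (pow_nonneg ha 3)) (pow_pos (by norm_num : (0:ℝ) < (1/2:ℝ)) n).le]
  calc ∑' n : ℕ, ENNReal.ofReal ((2:ℝ)^(J - (n:ℤ)) * (if a ≤ (2:ℝ)^(-(J - (n:ℤ))) then a else 0)^3)
      ≤ ∑' n : ℕ, ENNReal.ofReal ((2:ℝ)^J * a^3 * (1/2)^n) :=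
        ENNReal.tsum_le_tsum fun n => ENNReal.ofReal_le_ofReal (hsummand n)
    _ = ENNReal.ofReal (∑' n : ℕ, (2:ℝ)^J * a^3 * (1/2)^n) := by
        rw [ENNReal.ofReal_tsum_of_nonneg]
        · intro n
          exact mul_nonneg (mul_nonneg (zpow_pos (by norm_num : (0:ℝ) < 2) J).le (pow_nonneg ha 3)) (by positivity)
        · exact (summable_geometric_of_lt_one (by norm_num) (by norm_num)).mul_left _
    _ ≤ ENNReal.ofReal (2 * a^2) := by
        apply ENNReal.ofReal_le_ofReal
        rw [tsum_mul_left, tsum_geometric_of_lt_one (by norm_num) (by norm_num)]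
        have hge : (2:ℝ)^J * a^3 ≤ a^2 := by
          have h1 : (2:ℝ)^J * a ≤ a⁻¹ * a := mul_le_mul_of_nonneg_right hJ ha
          rw [inv_mul_cancel₀ (ne_of_gt h0)] at h1
          nlinarith [pow_pos h0 2]
        norm_num
        nlinarith

lemma cube_meas (j : ℤ) (k : Fin 2 → ℤ) : MeasurableSet (dyadicCube j k) := by
  have : dyadicCube j k = ⋂ i, (fun ξ : E2 => ξ i) ⁻¹' (Set.Ico ((2:ℝ)^j * k i) ((2:ℝ)^j * (k i + 1))) := by
    ext ξ; simp [dyadicCube, Set.mem_iInter]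
  rw [this]
  exact MeasurableSet.iInter fun i =>
    ((measurable_pi_apply (a := i)).comp (PiLp.continuous_ofLp (p := 2) (β := fun _ : Fin 2 => ℝ)).measurable) measurableSet_Ico

lemma cube_key (j : ℤ) (ξ : E2) (k : Fin 2 → ℤ) :
    ξ ∈ dyadicCube j k ↔ ∀ i, k i = ⌊ξ i / (2:ℝ)^j⌋ := by
  have h2 : (0:ℝ) < (2:ℝ)^j := zpow_pos (by norm_num) j
  constructor
  · intro h i
    obtain ⟨h1, h2'⟩ := h i
    symm
    rw [Int.floor_eq_iff]
    constructor
    · rwa [le_div_iff₀ h2, mul_comm]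
    · rw [div_lt_iff₀ h2]
      calc ξ i < (2:ℝ)^j * (k i + 1) := h2'
        _ = ((k i : ℝ) + 1) * (2:ℝ)^j := by ring
  · intro h i
    rw [h i]
    constructor
    · rw [mul_comm, ← le_div_iff₀ h2]; exact Int.floor_le _
    · rw [← div_lt_iff₀' h2]; push_cast; exact Int.lt_floor_add_one _

lemma cube_union (j : ℤ) : ⋃ k, dyadicCube j k = Set.univ := by
  ext ξ
  simp only [Set.mem_iUnion, Set.mem_univ, iff_true]
  exact ⟨fun i => ⌊ξ i / (2:ℝ)^j⌋, (cube_key j ξ _).2 fun i => rfl⟩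

lemma cube_disj (j : ℤ) : Pairwise (Function.onFun Disjoint (dyadicCube j)) := by
  intro k k' hkk
  rw [Function.onFun, Set.disjoint_left]
  intro ξ h1 h2
  exact hkk (funext fun i => ((cube_key j ξ k).1 h1 i).trans (((cube_key j ξ k').1 h2 i)).symm)

/-- Discrete `ℓ²` summation estimate over dyadic cubes (small part): for `F ≥ 0` with
`‖F‖_{L²(ℝ²)} ≤ 1`, `∑_j ∑_{Q ∈ 𝒟_j} |Q|^{1/2} ‖F·χ_{F ≤ 2^{-j}}‖_{L³(Q)}³ ≲ 1`. -/
theorem stmt6 :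
    ∃ C > 0, ∀ F : E2 → ℝ, Measurable F → (∀ ξ, 0 ≤ F ξ) →
      eLpNorm F 2 volume ≤ 1 →
      (∑' q : ℤ × (Fin 2 → ℤ),
        ((4 : ℝ) ^ q.1) ^ (1 / 2 : ℝ) *
          ∫ ξ in dyadicCube q.1 q.2,
            (if F ξ ≤ (2 : ℝ) ^ (-q.1) then F ξ else 0) ^ 3)
        ≤ C := by
  refine ⟨2, by norm_num, ?_⟩
  intro F hF hF0 hF2
  have hgmeas : ∀ j : ℤ, Measurable (fun ξ => (if F ξ ≤ (2:ℝ)^(-j) then F ξ else 0)^3) :=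
    fun j => (Measurable.ite (measurableSet_le hF measurable_const) hF measurable_const).pow_const 3
  have hgnn : ∀ (j : ℤ) (ξ : E2), 0 ≤ (if F ξ ≤ (2:ℝ)^(-j) then F ξ else 0)^3 := by
    intro j ξ
    refine pow_nonneg ?_ 3
    split <;> [exact hF0 ξ; exact le_refl 0]
  set t : ℤ × (Fin 2 → ℤ) → ℝ≥0∞ := fun q =>
    ENNReal.ofReal ((2:ℝ)^q.1) *
      ∫⁻ ξ in dyadicCube q.1 q.2, ENNReal.ofReal ((if F ξ ≤ (2:ℝ)^(-q.1) then F ξ else 0)^3)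
    with ht
  -- L² bound
  have hL2 : ∫⁻ ξ, ENNReal.ofReal (F ξ^2) ≤ 1 := by
    rw [eLpNorm_eq_lintegral_rpow_enorm_toReal (by norm_num) (by norm_num)] at hF2
    have heq : ∀ ξ : E2, ‖F ξ‖ₑ ^ ((2:ℝ≥0∞).toReal) = ENNReal.ofReal (F ξ^2) := by
      intro ξ
      rw [Real.enorm_eq_ofReal (hF0 ξ)]
      norm_num
      exact (ENNReal.ofReal_pow (hF0 ξ) 2).symm
    simp only [heq] at hF2
    have h2 := ENNReal.rpow_le_rpow hF2 (by norm_num : (0:ℝ) ≤ 2)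
    rw [ENNReal.one_rpow, ← ENNReal.rpow_mul] at h2
    norm_num at h2
    exact h2
  -- main ENNReal bound
  have hT : ∑' q, t q ≤ 2 := by
    have hprod : (∑' q : ℤ × (Fin 2 → ℤ), t q) = ∑' j, ∑' k, t (j, k) := ENNReal.tsum_prod (f := fun j k => t (j, k))
    rw [hprod]
    have step1 : ∀ j : ℤ, (∑' k, t (j, k)) =
        ENNReal.ofReal ((2:ℝ)^j) *
          ∫⁻ ξ, ENNReal.ofReal ((if F ξ ≤ (2:ℝ)^(-j) then F ξ else 0)^3) := by
      intro j
      rw [ht]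
      simp only
      rw [ENNReal.tsum_mul_left]
      congr 1
      have hU : (∫⁻ ξ in ⋃ k, dyadicCube j k,
            ENNReal.ofReal ((if F ξ ≤ (2:ℝ)^(-j) then F ξ else 0)^3) ∂volume)
          = ∑' k, ∫⁻ ξ in dyadicCube j k,
            ENNReal.ofReal ((if F ξ ≤ (2:ℝ)^(-j) then F ξ else 0)^3) ∂volume :=
        lintegral_iUnion (cube_meas j) (cube_disj j) _
      rw [cube_union, Measure.restrict_univ] at hU
      exact hU.symm
    calc (∑' j, ∑' k, t (j, k))
        = ∑' j : ℤ, ∫⁻ ξ, ENNReal.ofReal ((2:ℝ)^j) *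
            ENNReal.ofReal ((if F ξ ≤ (2:ℝ)^(-j) then F ξ else 0)^3) := by
          refine tsum_congr fun j => ?_
          rw [step1 j, ← lintegral_const_mul _ ((hgmeas j).ennreal_ofReal)]
      _ = ∫⁻ ξ, ∑' j : ℤ, ENNReal.ofReal ((2:ℝ)^j) *
            ENNReal.ofReal ((if F ξ ≤ (2:ℝ)^(-j) then F ξ else 0)^3) := by
          rw [← lintegral_tsum fun j => (((hgmeas j).ennreal_ofReal).const_mul _).aemeasurable]
      _ ≤ ∫⁻ ξ, ENNReal.ofReal (2 * F ξ^2) := by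
          refine lintegral_mono fun ξ => ?_
          calc ∑' j : ℤ, ENNReal.ofReal ((2:ℝ)^j) *
                ENNReal.ofReal ((if F ξ ≤ (2:ℝ)^(-j) then F ξ else 0)^3)
              = ∑' j : ℤ, ENNReal.ofReal ((2:ℝ)^j * (if F ξ ≤ (2:ℝ)^(-j) then F ξ else 0)^3) := by
                refine tsum_congr fun j => ?_
                rw [ENNReal.ofReal_mul (zpow_pos (by norm_num : (0:ℝ) < 2) j).le]
            _ ≤ ENNReal.ofReal (2 * F ξ^2) := ptw (F ξ) (hF0 ξ)
      _ = 2 * ∫⁻ ξ, ENNReal.ofReal (F ξ^2) := by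
          rw [← lintegral_const_mul _ (hF.pow_const 2).ennreal_ofReal]
          refine lintegral_congr fun ξ => ?_
          rw [ENNReal.ofReal_mul (by norm_num : (0:ℝ) ≤ 2)]
          norm_num
      _ ≤ 2 := by
          calc 2 * ∫⁻ ξ, ENNReal.ofReal (F ξ^2) ≤ 2 * 1 := mul_le_mul_right hL2 2
            _ = 2 := mul_one 2
  -- term identity
  have hterm : ∀ q : ℤ × (Fin 2 → ℤ),
      ((4 : ℝ) ^ q.1) ^ (1 / 2 : ℝ) *
        ∫ ξ in dyadicCube q.1 q.2, (if F ξ ≤ (2:ℝ)^(-q.1) then F ξ else 0)^3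
      = (t q).toReal := by
    intro q
    have h4 : ((4 : ℝ) ^ q.1) ^ (1 / 2 : ℝ) = (2:ℝ)^q.1 := by
      have hx : (0:ℝ) < (2:ℝ)^q.1 := zpow_pos (by norm_num) q.1
      have : (4:ℝ)^q.1 = ((2:ℝ)^q.1)^(2:ℕ) := by
        rw [sq, ← mul_zpow]; norm_num
      rw [this, ← Real.rpow_natCast ((2:ℝ)^q.1) 2, ← Real.rpow_mul hx.le]
      norm_num
    rw [ht]
    simp only
    rw [ENNReal.toReal_mul, ENNReal.toReal_ofReal (zpow_pos (by norm_num : (0:ℝ) < 2) q.1).le, h4]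
    congr 1
    rw [integral_eq_lintegral_of_nonneg_ae (Filter.Eventually.of_forall fun ξ => hgnn q.1 ξ)
      ((hgmeas q.1).aestronglyMeasurable)]
  -- conclude
  refine tsum_le_of_sum_le' (by norm_num) fun u => ?_
  have hne : ∀ q ∈ u, t q ≠ ⊤ := fun q _ =>
    ne_top_of_le_ne_top (by norm_num) (le_trans (ENNReal.le_tsum q) hT)
  calc ∑ q ∈ u, ((4 : ℝ) ^ q.1) ^ (1 / 2 : ℝ) *
        ∫ ξ in dyadicCube q.1 q.2, (if F ξ ≤ (2:ℝ)^(-q.1) then F ξ else 0)^3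
      = ∑ q ∈ u, (t q).toReal := Finset.sum_congr rfl fun q _ => hterm q
    _ = (∑ q ∈ u, t q).toReal := (ENNReal.toReal_sum hne).symm
    _ ≤ (2:ℝ≥0∞).toReal := ENNReal.toReal_mono (by norm_num) (le_trans (ENNReal.sum_le_tsum u) hT)
    _ = 2 := by norm_num
end
end

section
/- Whitney decomposition partition property: For distinct ξ, ξ' ∈ ℝ², there is a unique maximal pair of dyadic cubes Q ∋ ξ and Q' ∋ ξ' with |Q| = |Q'| and 4·diam(Q) ≤ dist(Q, Q'). Denoting by 𝒲 the family of all such pairs, one has Σ_{(Q,Q')∈𝒲} χ_Q(ξ)χ_{Q'}(ξ') = 1 for almost every (ξ,ξ') ∈ ℝ² × ℝ², and moreover any pair (Q,Q') ∈ 𝒲 satisfies dist(Q,Q') ≤ 10·diam(Q), so that for each Q the number of Q' with (Q,Q') ∈ 𝒲 is bounded by an absolute constant. -/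
open MeasureTheory
open scoped Classical

noncomputable section

/-- The distance between two sets. -/
noncomputable def setDist (A B : Set E2) : ℝ :=
  sInf {d | ∃ a ∈ A, ∃ b ∈ B, d = dist a b}

/-- `goodPair j k k' ξ ξ'` : the dyadic cubes `Q = Q_{j,k} ∋ ξ` and `Q' = Q_{j,k'} ∋ ξ'`
have equal side-length `2^j` and satisfy `4 diam(Q) ≤ dist(Q,Q')`. -/
def goodPair (j : ℤ) (k k' : Fin 2 → ℤ) (ξ ξ' : E2) : Prop :=
  ξ ∈ dyadicCube j k ∧ ξ' ∈ dyadicCube j k' ∧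
    4 * Metric.diam (dyadicCube j k) ≤ setDist (dyadicCube j k) (dyadicCube j k')

/-- Membership in the Whitney family `𝒲`: the pair of cubes `(Q_{j,k}, Q_{j,k'})` is the
maximal good pair for some pair of distinct points. -/
def isWhitney (j : ℤ) (k k' : Fin 2 → ℤ) : Prop :=
  ∃ η η' : E2, η ≠ η' ∧ goodPair j k k' η η' ∧
    ∀ j₂ k₂ k₂', goodPair j₂ k₂ k₂' η η' → j₂ ≤ j

/- ## helper lemmas -/

lemma hpos (j : ℤ) : (0:ℝ) < 2 ^ j := by positivity

lemma sqrt2_le : Real.sqrt 2 ≤ 1.5 := by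
  nlinarith [Real.sq_sqrt (by norm_num : (0:ℝ) ≤ 2), Real.sqrt_nonneg 2]

lemma one_le_sqrt2 : (1:ℝ) ≤ Real.sqrt 2 := by
  nlinarith [Real.sq_sqrt (by norm_num : (0:ℝ) ≤ 2), Real.sqrt_nonneg 2]

lemma coord_le_dist (x y : E2) (i : Fin 2) : |x i - y i| ≤ dist x y := by
  rw [EuclideanSpace.dist_eq]
  rw [show |x i - y i| = Real.sqrt (|x i - y i|^2) by rw [Real.sqrt_sq_eq_abs, abs_abs]]
  apply Real.sqrt_le_sqrt
  rw [← Real.dist_eq]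
  exact Finset.single_le_sum (f := fun i => dist (x i) (y i)^2) (fun i _ => by positivity)
    (Finset.mem_univ i)

lemma dist_le_coord (x y : E2) {c : ℝ} (hc : 0 ≤ c) (h : ∀ i, |x i - y i| ≤ c) :
    dist x y ≤ Real.sqrt 2 * c := by
  rw [EuclideanSpace.dist_eq, Fin.sum_univ_two]
  have h0 := h 0; have h1 := h 1
  rw [Real.dist_eq, Real.dist_eq]
  have hb : |x 0 - y 0|^2 + |x 1 - y 1|^2 ≤ 2 * c^2 := by
    nlinarith [abs_nonneg (x 0 - y 0), abs_nonneg (x 1 - y 1)]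
  calc Real.sqrt (|x 0 - y 0|^2 + |x 1 - y 1|^2) ≤ Real.sqrt (2*c^2) := Real.sqrt_le_sqrt hb
    _ = Real.sqrt 2 * c := by rw [Real.sqrt_mul (by norm_num), Real.sqrt_sq hc]

lemma corner_mem (j : ℤ) (k : Fin 2 → ℤ) : (WithLp.toLp 2 (fun i => (2:ℝ)^j * k i) : E2) ∈ dyadicCube j k := by
  intro i
  refine ⟨le_refl _, ?_⟩
  show (2:ℝ)^j * k i < 2^j * (k i + 1)
  nlinarith [hpos j]

lemma cube_nonempty (j : ℤ) (k : Fin 2 → ℤ) : (dyadicCube j k).Nonempty :=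
  ⟨_, corner_mem j k⟩

lemma exists_cube (j : ℤ) (ξ : E2) : ∃ k, ξ ∈ dyadicCube j k := by
  refine ⟨fun i => ⌊ξ i / 2^j⌋, fun i => ?_⟩
  have h := hpos j
  have h1 : (⌊ξ i / 2^j⌋ : ℝ) ≤ ξ i / 2^j := Int.floor_le _
  have h2 : ξ i / 2^j < ⌊ξ i / 2^j⌋ + 1 := Int.lt_floor_add_one _
  have e : (2:ℝ)^j * (ξ i / 2^j) = ξ i := by field_simp
  constructor
  · have := mul_le_mul_of_nonneg_left h1 h.le
    calc (2:ℝ)^j * (⌊ξ i / 2^j⌋ : ℝ) ≤ 2^j * (ξ i / 2^j) := this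
      _ = ξ i := e
  · have := mul_lt_mul_of_pos_left h2 h
    calc ξ i = (2:ℝ)^j * (ξ i / 2^j) := e.symm
      _ < 2^j * ((⌊ξ i / 2^j⌋ : ℝ) + 1) := this

lemma cube_unique {j : ℤ} {k k' : Fin 2 → ℤ} {ξ : E2}
    (h1 : ξ ∈ dyadicCube j k) (h2 : ξ ∈ dyadicCube j k') : k = k' := by
  funext i
  obtain ⟨a1, a2⟩ := h1 i
  obtain ⟨b1, b2⟩ := h2 i
  have h := hpos j
  have c1 : (k i : ℝ) < k' i + 1 := by
    have := a1.trans_lt b2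
    exact lt_of_mul_lt_mul_left this h.le
  have c2 : (k' i : ℝ) < k i + 1 := by
    have := b1.trans_lt a2
    exact lt_of_mul_lt_mul_left this h.le
  have d1 : k i < k' i + 1 := by exact_mod_cast c1
  have d2 : k' i < k i + 1 := by exact_mod_cast c2
  omega

lemma cube_bounded (j : ℤ) (k : Fin 2 → ℤ) : Bornology.IsBounded (dyadicCube j k) := by
  rw [Metric.isBounded_iff]
  refine ⟨Real.sqrt 2 * 2^j, fun x hx y hy => ?_⟩
  apply dist_le_coord _ _ (hpos j).le
  intro i
  obtain ⟨a1, a2⟩ := hx i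
  obtain ⟨b1, b2⟩ := hy i
  have e : (2:ℝ)^j * (k i + 1) = 2^j * k i + 2^j := by ring
  rw [abs_le]
  constructor <;> linarith

lemma diam_cube (j : ℤ) (k : Fin 2 → ℤ) :
    Metric.diam (dyadicCube j k) = Real.sqrt 2 * 2^j := by
  have h := hpos j
  apply le_antisymm
  · apply Metric.diam_le_of_forall_dist_le (by positivity)
    intro x hx y hy
    apply dist_le_coord _ _ h.le
    intro i
    obtain ⟨a1, a2⟩ := hx i
    obtain ⟨b1, b2⟩ := hy i
    have e : (2:ℝ)^j * (k i + 1) = 2^j * k i + 2^j := by ring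
    rw [abs_le]
    constructor <;> linarith
  · apply le_of_forall_pos_le_add
    intro ε hε
    set δ : ℝ := min ((2:ℝ)^j/2) (ε/2) with hδdef
    have hδ0 : 0 < δ := lt_min (by positivity) (by linarith)
    have hδ1 : δ ≤ 2^j/2 := min_le_left _ _
    have hδ2 : δ ≤ ε/2 := min_le_right _ _
    have hs : (0:ℝ) ≤ 2^j - δ := by linarith
    have key : ∀ a b : E2, a ∈ dyadicCube j k → b ∈ dyadicCube j k →
        (∀ i, b i - a i = 2^j - δ) →
        Real.sqrt 2 * (2^j - δ) ≤ Metric.diam (dyadicCube j k) := by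
      intro a b ha hb hab
      have hd : dist a b = Real.sqrt 2 * (2^j - δ) := by
        rw [EuclideanSpace.dist_eq, Fin.sum_univ_two, Real.dist_eq, Real.dist_eq]
        rw [show a 0 - b 0 = -((2:ℝ)^j - δ) by linarith [hab 0]]
        rw [show a 1 - b 1 = -((2:ℝ)^j - δ) by linarith [hab 1]]
        rw [abs_neg, abs_of_nonneg hs]
        rw [show ((2:ℝ)^j - δ)^2 + ((2:ℝ)^j - δ)^2 = 2 * ((2:ℝ)^j - δ)^2 by ring]
        rw [Real.sqrt_mul (by norm_num), Real.sqrt_sq hs]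
      rw [← hd]
      exact Metric.dist_le_diam_of_mem (cube_bounded j k) ha hb
    have hb : (WithLp.toLp 2 (fun i => (2:ℝ)^j * k i + (2^j - δ)) : E2) ∈ dyadicCube j k := by
      intro i
      have e : (2:ℝ)^j * (k i + 1) = 2^j * k i + 2^j := by ring
      constructor
      · show (2:ℝ)^j * k i ≤ 2^j * k i + (2^j - δ); linarith
      · show (2:ℝ)^j * k i + (2^j - δ) < 2^j * (k i + 1); linarith
    have hkey := key _ _ (corner_mem j k) hb (fun i => by
      show (2:ℝ)^j * k i + (2^j - δ) - 2^j * k i = 2^j - δ; ring)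
    have : Real.sqrt 2 * δ ≤ 2 * δ := by nlinarith [sqrt2_le, hδ0.le]
    nlinarith [sqrt2_le]

lemma setDist_bdd (A B : Set E2) : BddBelow {d | ∃ a ∈ A, ∃ b ∈ B, d = dist a b} := by
  refine ⟨0, ?_⟩
  rintro d ⟨a, _, b, _, rfl⟩
  exact dist_nonneg

lemma setDist_le {A B : Set E2} {a b : E2} (ha : a ∈ A) (hb : b ∈ B) :
    setDist A B ≤ dist a b :=
  csInf_le (setDist_bdd A B) ⟨a, ha, b, hb, rfl⟩

lemma le_setDist {A B : Set E2} (hA : A.Nonempty) (hB : B.Nonempty) {c : ℝ}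
    (h : ∀ a ∈ A, ∀ b ∈ B, c ≤ dist a b) : c ≤ setDist A B := by
  obtain ⟨a0, ha0⟩ := hA
  obtain ⟨b0, hb0⟩ := hB
  refine le_csInf ⟨dist a0 b0, a0, ha0, b0, hb0, rfl⟩ ?_
  rintro d ⟨a, ha, b, hb, rfl⟩
  exact h a ha b hb

lemma exists_lt_setDist_add {A B : Set E2} (hA : A.Nonempty) (hB : B.Nonempty) {ε : ℝ}
    (hε : 0 < ε) : ∃ a ∈ A, ∃ b ∈ B, dist a b < setDist A B + ε := by
  obtain ⟨d, hd, hlt⟩ := Real.lt_sInf_add_pos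
    (s := {d | ∃ a ∈ A, ∃ b ∈ B, d = dist a b})
    ⟨dist hA.choose hB.choose, hA.choose, hA.choose_spec, hB.choose, hB.choose_spec, rfl⟩ hε
  obtain ⟨a, ha, b, hb, rfl⟩ := hd
  exact ⟨a, ha, b, hb, hlt⟩

/-- nesting: a small cube meeting a bigger dyadic cube is contained in it -/
lemma cube_nested {j j₂ : ℤ} (hj : j ≤ j₂) {k k₂ : Fin 2 → ℤ} {x y : E2}
    (hx : x ∈ dyadicCube j k) (hx₂ : x ∈ dyadicCube j₂ k₂) (hy : y ∈ dyadicCube j k) :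
    y ∈ dyadicCube j₂ k₂ := by
  intro i
  obtain ⟨hx1, hx2⟩ := hx i
  obtain ⟨hx3, hx4⟩ := hx₂ i
  obtain ⟨hy1, hy2⟩ := hy i
  have h := hpos j
  set d : ℕ := (j₂ - j).toNat with hd
  have h2 : (2:ℝ)^j₂ = 2^j * 2^d := by
    rw [← zpow_natCast (2:ℝ) d, ← zpow_add₀ (two_ne_zero) j]
    congr 1
    omega
  have hx3' : (2:ℝ)^j * ((2:ℝ)^d * k₂ i) ≤ x i := by
    rw [h2] at hx3; calc (2:ℝ)^j * ((2:ℝ)^d * k₂ i) = 2^j * 2^d * k₂ i := by ring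
      _ ≤ x i := hx3
  have hx4' : x i < (2:ℝ)^j * ((2:ℝ)^d * k₂ i + 2^d) := by
    rw [h2] at hx4; calc x i < 2^j * 2^d * (k₂ i + 1) := hx4
      _ = (2:ℝ)^j * ((2:ℝ)^d * k₂ i + 2^d) := by ring
  have c1 : (2^d : ℤ) * k₂ i ≤ k i := by
    have t : (2:ℝ)^j * ((2:ℝ)^d * k₂ i) < 2^j * ((k i : ℝ) + 1) := hx3'.trans_lt hx2
    have t2 := lt_of_mul_lt_mul_left t h.le
    have t3 : ((2^d * k₂ i : ℤ) : ℝ) < ((k i + 1 : ℤ) : ℝ) := by push_cast; push_cast at t2; linarith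
    have := (by exact_mod_cast t3 : (2^d * k₂ i : ℤ) < k i + 1)
    omega
  have c2 : k i + 1 ≤ (2^d : ℤ) * k₂ i + 2^d := by
    have t : (2:ℝ)^j * (k i : ℝ) < 2^j * ((2:ℝ)^d * k₂ i + 2^d) := hx1.trans_lt hx4'
    have t2 := lt_of_mul_lt_mul_left t h.le
    have t3 : ((k i : ℤ) : ℝ) < ((2^d * k₂ i + 2^d : ℤ) : ℝ) := by push_cast; push_cast at t2; linarith
    have := (by exact_mod_cast t3 : (k i : ℤ) < 2^d * k₂ i + 2^d)
    omega
  have r1 : ((2:ℝ)^d * k₂ i) ≤ (k i : ℝ) := by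
    have := (by exact_mod_cast c1 : ((2^d * k₂ i : ℤ) : ℝ) ≤ ((k i : ℤ) : ℝ))
    push_cast at this; linarith
  have r2 : ((k i : ℝ) + 1) ≤ (2:ℝ)^d * k₂ i + 2^d := by
    have := (by exact_mod_cast c2 : ((k i + 1 : ℤ) : ℝ) ≤ ((2^d * k₂ i + 2^d : ℤ) : ℝ))
    push_cast at this; linarith
  rw [h2]
  constructor
  · calc (2:ℝ)^j * 2^d * (k₂ i) = 2^j * ((2:ℝ)^d * k₂ i) := by ring
      _ ≤ 2^j * k i := by nlinarith
      _ ≤ y i := hy1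
  · calc y i < 2^j * ((k i : ℝ) + 1) := hy2
      _ ≤ 2^j * ((2:ℝ)^d * k₂ i + 2^d) := by nlinarith
      _ = 2^j * 2^d * ((k₂ i : ℝ) + 1) := by ring

/-- Parent cube: contains the child, and every point of the parent is within
`2^j + δ` (coordinatewise) of the child. -/
lemma parent (j : ℤ) (k : Fin 2 → ℤ) :
    ∃ m, dyadicCube j k ⊆ dyadicCube (j+1) m ∧
      ∀ x ∈ dyadicCube (j+1) m, ∀ δ : ℝ, 0 < δ → δ ≤ 2^j →
        ∃ y ∈ dyadicCube j k, ∀ i, |x i - y i| ≤ 2^j + δ := by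
  have h := hpos j
  have e1 : (2:ℝ)^(j+1) = 2 * 2^j := by
    rw [zpow_add_one₀ (two_ne_zero)]; ring
  have hint : ∀ i : Fin 2, 2 * (k i / 2) ≤ k i ∧ k i + 1 ≤ 2 * (k i / 2) + 2 :=
    fun i => by omega
  have rint : ∀ i : Fin 2, 2 * ((k i / 2 : ℤ) : ℝ) ≤ (k i : ℝ) ∧
      ((k i : ℝ) + 1) ≤ 2 * ((k i / 2 : ℤ) : ℝ) + 2 := by
    intro i
    obtain ⟨q1, q2⟩ := hint i
    constructor
    · exact_mod_cast q1
    · exact_mod_cast q2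
  refine ⟨fun i => k i / 2, ?_, ?_⟩
  · intro x hx i
    obtain ⟨hx1, hx2⟩ := hx i
    obtain ⟨q1, q2⟩ := rint i
    rw [e1]
    constructor
    · nlinarith
    · nlinarith
  · intro x hx δ hδ0 hδh
    refine ⟨WithLp.toLp 2 (fun i => max ((2:ℝ)^j * k i) (min (x i) ((2:ℝ)^j * (k i + 1) - δ))), ?_, ?_⟩
    · intro i
      have e : (2:ℝ)^j * (k i + 1) = 2^j * k i + 2^j := by ring
      have hab : (2:ℝ)^j * k i ≤ 2^j * (k i + 1) - δ := by linarith
      constructor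
      · exact le_max_left _ _
      · show max ((2:ℝ)^j * k i) (min (x i) ((2:ℝ)^j * (k i + 1) - δ)) < 2^j * (k i + 1)
        calc max ((2:ℝ)^j * k i) (min (x i) ((2:ℝ)^j * (k i + 1) - δ))
            ≤ max ((2:ℝ)^j * k i) ((2:ℝ)^j * (k i + 1) - δ) :=
              max_le_max le_rfl (min_le_right _ _)
          _ = (2:ℝ)^j * (k i + 1) - δ := max_eq_right hab
          _ < 2^j * (k i + 1) := by linarith
    · intro i
      obtain ⟨hx1, hx2⟩ := hx i
      rw [e1] at hx1 hx2
      obtain ⟨q1, q2⟩ := rint i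
      show |x i - max ((2:ℝ)^j * k i) (min (x i) ((2:ℝ)^j * (k i + 1) - δ))| ≤ 2^j + δ
      have e : (2:ℝ)^j * (k i + 1) = 2^j * k i + 2^j := by ring
      have hab : (2:ℝ)^j * k i ≤ 2^j * (k i + 1) - δ := by linarith
      -- parent bounds in convenient form
      have p1 : 2 * 2^j * ((k i / 2 : ℤ) : ℝ) ≤ x i := hx1
      have p2 : x i < 2 * 2^j * (((k i / 2 : ℤ) : ℝ) + 1) := hx2
      -- child left endpoint vs parent
      have ch1 : 2 * 2^j * ((k i / 2 : ℤ) : ℝ) ≤ (2:ℝ)^j * k i := by nlinarith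
      have ch2 : (2:ℝ)^j * (k i + 1) ≤ 2 * 2^j * (((k i / 2 : ℤ) : ℝ) + 1) := by nlinarith
      rcases le_total (x i) ((2:ℝ)^j * k i) with hxa | hxa
      · rw [min_eq_left (hxa.trans hab), max_eq_left hxa]
        rw [abs_le]
        constructor <;> nlinarith
      · rcases le_total (x i) ((2:ℝ)^j * (k i + 1) - δ) with hxb | hxb
        · rw [min_eq_left hxb, max_eq_right hxa]
          simp [abs_of_nonneg]
          positivity
        · rw [min_eq_right hxb, max_eq_right hab]
          rw [abs_le]
          constructor <;> nlinarith

lemma good_gap {j : ℤ} {k k' : Fin 2 → ℤ} {ξ ξ' : E2} (hg : goodPair j k k' ξ ξ') :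
    (2:ℝ)^j ≤ dist ξ ξ' := by
  obtain ⟨hk, hk', hgood⟩ := hg
  have h1 : setDist (dyadicCube j k) (dyadicCube j k') ≤ dist ξ ξ' := setDist_le hk hk'
  rw [diam_cube] at hgood
  nlinarith [hpos j, one_le_sqrt2]

lemma good_exists {ξ ξ' : E2} (h : ξ ≠ ξ') : ∃ j k k', goodPair j k k' ξ ξ' := by
  have hD : 0 < dist ξ ξ' := dist_pos.2 h
  obtain ⟨n, hn⟩ := exists_pow_lt_of_lt_one (show (0:ℝ) < dist ξ ξ' / 9 by linarith)
    (by norm_num : (1:ℝ)/2 < 1)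
  refine ⟨-(n:ℤ), (exists_cube _ ξ).choose, (exists_cube _ ξ').choose,
    (exists_cube _ ξ).choose_spec, (exists_cube _ ξ').choose_spec, ?_⟩
  set j : ℤ := -(n:ℤ)
  have hk := (exists_cube j ξ).choose_spec
  have hk' := (exists_cube j ξ').choose_spec
  have hj : (2:ℝ)^j ≤ dist ξ ξ' / 9 := by
    have e : (2:ℝ)^j = (1/2)^n := by
      rw [one_div, inv_pow, ← zpow_natCast (2:ℝ) n, ← zpow_neg]
    rw [e]
    exact hn.le
  rw [diam_cube]
  apply le_setDist (cube_nonempty _ _) (cube_nonempty _ _)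
  intro a ha b hb
  have t1 : dist ξ a ≤ Real.sqrt 2 * 2^j := by
    rw [← diam_cube]
    exact Metric.dist_le_diam_of_mem (cube_bounded _ _) hk ha
  have t2 : dist b ξ' ≤ Real.sqrt 2 * 2^j := by
    rw [← diam_cube]
    exact Metric.dist_le_diam_of_mem (cube_bounded _ _) hb hk'
  have tri : dist ξ ξ' ≤ dist ξ a + dist a b + dist b ξ' := dist_triangle4 ξ a b ξ'
  nlinarith [hpos j, sqrt2_le, Real.sqrt_nonneg 2]

lemma exists_max_good {ξ ξ' : E2} (h : ξ ≠ ξ') :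
    ∃ j, (∃ k k', goodPair j k k' ξ ξ') ∧
      ∀ j₂, (∃ k k', goodPair j₂ k k' ξ ξ') → j₂ ≤ j := by
  have hgt := Int.exists_greatest_of_bdd (P := fun j => ∃ k k', goodPair j k k' ξ ξ') ?_ ?_
  · obtain ⟨j, hj, hmax⟩ := hgt
    exact ⟨j, hj, hmax⟩
  · obtain ⟨n, hn⟩ := exists_nat_gt (dist ξ ξ')
    refine ⟨n, ?_⟩
    rintro z ⟨k, k', hg⟩
    have h1 : (2:ℝ)^z ≤ dist ξ ξ' := good_gap hg
    have h2 : (dist ξ ξ') < 2^n := by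
      calc dist ξ ξ' < n := hn
        _ ≤ 2^n := by exact_mod_cast (Nat.lt_two_pow_self (n := n)).le
    have h3 : (2:ℝ)^z < (2:ℝ)^(n:ℤ) := by
      rw [zpow_natCast]
      linarith
    exact le_of_lt ((zpow_lt_zpow_iff_right₀ (by norm_num : (1:ℝ) < 2)).1 h3)
  · obtain ⟨j, k, k', hg⟩ := good_exists h
    exact ⟨j, k, k', hg⟩

lemma part1 {ξ ξ' : E2} (h : ξ ≠ ξ') :
    ∃! q : ℤ × (Fin 2 → ℤ) × (Fin 2 → ℤ),
      goodPair q.1 q.2.1 q.2.2 ξ ξ' ∧ ∀ j₂ k₂ k₂', goodPair j₂ k₂ k₂' ξ ξ' → j₂ ≤ q.1 := by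
  obtain ⟨j, ⟨k, k', hg⟩, hmax⟩ := exists_max_good h
  refine ⟨⟨j, k, k'⟩, ⟨hg, fun j₂ k₂ k₂' hg₂ => hmax j₂ ⟨k₂, k₂', hg₂⟩⟩, ?_⟩
  rintro ⟨j₂, k₂, k₂'⟩ ⟨hg₂, hmax₂⟩
  have hj : j₂ = j := le_antisymm (hmax j₂ ⟨_, _, hg₂⟩) (hmax₂ j k k' hg)
  subst hj
  have e1 : k₂ = k := cube_unique hg₂.1 hg.1
  have e2 : k₂' = k' := cube_unique hg₂.2.1 hg.2.1
  simp [e1, e2]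

lemma whitney_max {j : ℤ} {k k' : Fin 2 → ℤ} {ξ ξ' : E2} (hw : isWhitney j k k')
    (hk : ξ ∈ dyadicCube j k) (hk' : ξ' ∈ dyadicCube j k') :
    goodPair j k k' ξ ξ' ∧ ∀ j₂ k₂ k₂', goodPair j₂ k₂ k₂' ξ ξ' → j₂ ≤ j := by
  obtain ⟨η, η', hne, hg, hmax⟩ := hw
  refine ⟨⟨hk, hk', hg.2.2⟩, ?_⟩
  intro j₂ k₂ k₂' hg₂
  by_contra hlt
  push_neg at hlt
  have hj : j ≤ j₂ := hlt.le
  have hη : η ∈ dyadicCube j₂ k₂ := cube_nested hj hk hg₂.1 hg.1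
  have hη' : η' ∈ dyadicCube j₂ k₂' := cube_nested hj hk' hg₂.2.1 hg.2.1
  exact absurd (hmax j₂ k₂ k₂' ⟨hη, hη', hg₂.2.2⟩) (by omega)

lemma part2 {ξ ξ' : E2} (h : ξ ≠ ξ') :
    (∑' q : ℤ × (Fin 2 → ℤ) × (Fin 2 → ℤ),
      (if isWhitney q.1 q.2.1 q.2.2 ∧ ξ ∈ dyadicCube q.1 q.2.1 ∧ ξ' ∈ dyadicCube q.1 q.2.2
        then (1 : ℝ) else 0)) = 1 := by
  obtain ⟨q₀, hq₀, huniq⟩ := part1 h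
  rw [tsum_eq_single q₀ ?_]
  · rw [if_pos]
    exact ⟨⟨ξ, ξ', h, hq₀.1, hq₀.2⟩, hq₀.1.1, hq₀.1.2.1⟩
  · intro q hq
    rw [if_neg]
    intro ⟨hw, hk, hk'⟩
    exact hq (huniq q (whitney_max hw hk hk'))

lemma part3 {j : ℤ} {k k' : Fin 2 → ℤ} (hw : isWhitney j k k') :
    setDist (dyadicCube j k) (dyadicCube j k') ≤ 10 * Metric.diam (dyadicCube j k) := by
  obtain ⟨η, η', hne, hg, hmax⟩ := hw
  obtain ⟨m, hsub, hnear⟩ := parent j k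
  obtain ⟨m', hsub', hnear'⟩ := parent j k'
  have h := hpos j
  have e1 : (2:ℝ)^(j+1) = 2 * 2^j := by rw [zpow_add_one₀ (two_ne_zero)]; ring
  have hbad : setDist (dyadicCube (j+1) m) (dyadicCube (j+1) m')
      < 4 * Metric.diam (dyadicCube (j+1) m) := by
    by_contra hcontra
    push_neg at hcontra
    have hgood : goodPair (j+1) m m' η η' := ⟨hsub hg.1, hsub' hg.2.1, hcontra⟩
    have := hmax _ _ _ hgood
    omega
  rw [diam_cube] at hbad
  rw [e1] at hbad
  rw [diam_cube]
  apply le_of_forall_pos_le_add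
  intro ε hε
  set δ : ℝ := min ((2:ℝ)^j) (ε/8) with hδdef
  have hδ0 : 0 < δ := lt_min h (by linarith)
  have hδh : δ ≤ 2^j := min_le_left _ _
  have hδε : δ ≤ ε/8 := min_le_right _ _
  obtain ⟨aa, haa, bb, hbb, hdab⟩ := exists_lt_setDist_add (cube_nonempty (j+1) m)
    (cube_nonempty (j+1) m') (show (0:ℝ) < ε/2 by linarith)
  obtain ⟨a, ha, hpa⟩ := hnear aa haa δ hδ0 hδh
  obtain ⟨b, hb, hpb⟩ := hnear' bb hbb δ hδ0 hδh
  have d1 : dist a aa ≤ Real.sqrt 2 * (2^j + δ) := by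
    rw [dist_comm]
    exact dist_le_coord aa a (by positivity) hpa
  have d2 : dist bb b ≤ Real.sqrt 2 * (2^j + δ) :=
    dist_le_coord bb b (by positivity) hpb
  have tri : dist a b ≤ dist a aa + dist aa bb + dist bb b := dist_triangle4 a aa bb b
  have hle : setDist (dyadicCube j k) (dyadicCube j k') ≤ dist a b := setDist_le ha hb
  nlinarith [sqrt2_le, Real.sqrt_nonneg 2, hpos j]

lemma whitney_close {j : ℤ} {k k' : Fin 2 → ℤ} (hw : isWhitney j k k') :
    ∀ i, k i - 18 ≤ k' i ∧ k' i ≤ k i + 18 := by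
  have h3 := part3 hw
  obtain ⟨η, η', hne, hg, hmax⟩ := hw
  have h := hpos j
  have hkey : dist η η' - 2*(Real.sqrt 2 * 2^j)
      ≤ setDist (dyadicCube j k) (dyadicCube j k') := by
    apply le_setDist (cube_nonempty _ _) (cube_nonempty _ _)
    intro a ha b hb
    have t1 : dist η a ≤ Real.sqrt 2 * 2^j := by
      rw [← diam_cube]
      exact Metric.dist_le_diam_of_mem (cube_bounded _ _) hg.1 ha
    have t2 : dist b η' ≤ Real.sqrt 2 * 2^j := by
      rw [← diam_cube]
      exact Metric.dist_le_diam_of_mem (cube_bounded _ _) hb hg.2.1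
    have tri : dist η η' ≤ dist η a + dist a b + dist b η' := dist_triangle4 η a b η'
    linarith
  rw [diam_cube] at h3
  have hdd : dist η η' ≤ 18 * 2^j := by nlinarith [sqrt2_le, hpos j]
  intro i
  have hc := coord_le_dist η η' i
  obtain ⟨a1, a2⟩ := hg.1 i
  obtain ⟨b1, b2⟩ := hg.2.1 i
  have habs := abs_le.1 (hc.trans hdd)
  constructor
  · have t : (2:ℝ)^j * ((k i : ℝ) - 18) < 2^j * ((k' i : ℝ) + 1) := by nlinarith
    have t2 := lt_of_mul_lt_mul_left t h.le
    have t3 : (k i : ℤ) - 18 < k' i + 1 := by exact_mod_cast t2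
    omega
  · have t : (2:ℝ)^j * (k' i : ℝ) < 2^j * ((k i : ℝ) + 19) := by nlinarith
    have t2 := lt_of_mul_lt_mul_left t h.le
    have t3 : (k' i : ℤ) < k i + 19 := by exact_mod_cast t2
    omega

lemma part4 : ∃ C : ℕ, ∀ j k, {k' | isWhitney j k k'}.Finite ∧
    Set.ncard {k' | isWhitney j k k'} ≤ C := by
  refine ⟨1369, fun j k => ?_⟩
  have hsub : {k' | isWhitney j k k'}
      ⊆ Set.Icc (fun i => k i - 18) (fun i => k i + 18) := by
    intro k' hk'
    have hcl := whitney_close hk'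
    exact Set.mem_Icc.2 ⟨fun i => (hcl i).1, fun i => (hcl i).2⟩
  have hfin : (Set.Icc (fun i => k i - 18) (fun i => k i + 18) : Set (Fin 2 → ℤ)).Finite :=
    Set.finite_Icc _ _
  refine ⟨hfin.subset hsub, ?_⟩
  refine (Set.ncard_le_ncard hsub hfin).trans ?_
  rw [← Finset.coe_Icc, Set.ncard_coe_finset, Pi.card_Icc, Fin.prod_univ_two]
  rw [Int.card_Icc, Int.card_Icc]
  have e0 : (k 0 + 18 + 1 - (k 0 - 18)).toNat = 37 := by omega
  have e1 : (k 1 + 18 + 1 - (k 1 - 18)).toNat = 37 := by omega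
  rw [e0, e1]
  norm_num

/-- Whitney decomposition: for distinct `ξ, ξ'` there is a unique maximal good pair of
dyadic cubes; `∑_{(Q,Q')∈𝒲} χ_Q(ξ)χ_{Q'}(ξ') = 1` off the diagonal (hence a.e.);
every Whitney pair satisfies `dist(Q,Q') ≤ 10 diam(Q)`; and for each `Q` the number of
`Q'` with `(Q,Q') ∈ 𝒲` is bounded by an absolute constant. -/
theorem stmt7 :
    (∀ ξ ξ' : E2, ξ ≠ ξ' →
      ∃! q : ℤ × (Fin 2 → ℤ) × (Fin 2 → ℤ),
        goodPair q.1 q.2.1 q.2.2 ξ ξ' ∧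
          ∀ j₂ k₂ k₂', goodPair j₂ k₂ k₂' ξ ξ' → j₂ ≤ q.1) ∧
    (∀ ξ ξ' : E2, ξ ≠ ξ' →
      (∑' q : ℤ × (Fin 2 → ℤ) × (Fin 2 → ℤ),
        (if isWhitney q.1 q.2.1 q.2.2 ∧ ξ ∈ dyadicCube q.1 q.2.1 ∧ ξ' ∈ dyadicCube q.1 q.2.2
          then (1 : ℝ) else 0)) = 1) ∧
    (∀ j k k', isWhitney j k k' →
      setDist (dyadicCube j k) (dyadicCube j k') ≤ 10 * Metric.diam (dyadicCube j k)) ∧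
    (∃ C : ℕ, ∀ j k, {k' | isWhitney j k k'}.Finite ∧ Set.ncard {k' | isWhitney j k k'} ≤ C) := by
  exact ⟨fun ξ ξ' h => part1 h, fun ξ ξ' h => part2 h, fun j k k' hw => part3 hw, part4⟩
end
end
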